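/- arXiv:2107.10808 — 4 statements merged into one kernel-verified Lean document; each statement's English description precedes it below -/
import Mathlib

section
/- Let q ≥ 1 and let γ : [0, L] → ℝ² be a closed C² planar curve parametrized by arc length (γ(0) = γ(L), |γ'(s)| = 1 for all s). Then ∫₀^L |γ''(s)|^q ds ≥ (diam γ)^{1-q}, where diam γ = sup_{s,t} |γ(s) - γ(t)|. -/
open Real MeasureTheory Set

open scoped RealInnerProductSpace

/-- For a closed C² planar curve `γ : [0,L] → ℝ²` parametrized by arc length
and `q ≥ 1`, one has `∫₀^L |γ''|^q ≥ (diam γ)^(1-q)`. -/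
theorem curvature_integral_ge_diam_rpow (q L : ℝ) (hq : 1 ≤ q) (hL : 0 < L)
    (γ : ℝ → EuclideanSpace ℝ (Fin 2)) (hγ : ContDiff ℝ 2 γ)
    (hclosed : γ 0 = γ L) (harc : ∀ s ∈ Set.Icc (0:ℝ) L, ‖deriv γ s‖ = 1) :
    (Metric.diam (γ '' Set.Icc (0:ℝ) L)) ^ (1 - q)
      ≤ ∫ s in (0:ℝ)..L, ‖deriv (deriv γ) s‖ ^ q := by
  -- smoothness consequences
  have h2 : ContDiff ℝ (1 + 1 : ℕ) γ := by exact_mod_cast hγ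
  have hsucc := (contDiff_succ_iff_deriv (n := 1)).mp (by exact_mod_cast h2)
  have hdiff : Differentiable ℝ γ := hsucc.1
  have hγd1 : ContDiff ℝ 1 (deriv γ) := hsucc.2.2
  obtain ⟨hdiff2, hcont2⟩ := contDiff_one_iff_deriv.mp hγd1
  have hcont0 : Continuous γ := hdiff.continuous
  have hcont1 : Continuous (deriv γ) := hdiff2.continuous
  set d := Metric.diam (γ '' Set.Icc (0:ℝ) L) with hd
  -- d ≤ L
  have hdL : d ≤ L := by
    apply Metric.diam_le_of_forall_dist_le hL.le
    rintro x ⟨s, hs, rfl⟩ y ⟨t, ht, rfl⟩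
    rw [dist_eq_norm]
    have := Convex.norm_image_sub_le_of_norm_deriv_le (𝕜 := ℝ)
      (fun x _ => hdiff x)
      (fun x hx => le_of_eq (harc x hx)) (convex_Icc (0:ℝ) L) ht hs
    calc ‖γ s - γ t‖ ≤ 1 * ‖s - t‖ := this
    _ ≤ L := by
      rw [one_mul]
      have h1 := hs.1; have h2 := hs.2; have h3 := ht.1; have h4 := ht.2
      rw [Real.norm_eq_abs, abs_sub_le_iff]
      constructor <;> linarith
  -- 0 < d
  have hd0 : 0 < d := by
    rcases lt_or_eq_of_le (Metric.diam_nonneg (s := γ '' Set.Icc (0:ℝ) L)) with h | h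
    · exact h
    · exfalso
      have hconst : ∀ s ∈ Set.Icc (0:ℝ) L, γ s = γ 0 := by
        intro s hs
        have hb : Bornology.IsBounded (γ '' Set.Icc (0:ℝ) L) :=
          (isCompact_Icc.image hcont0).isBounded
        have := Metric.dist_le_diam_of_mem hb (Set.mem_image_of_mem _ hs)
          (Set.mem_image_of_mem _ ⟨le_refl (0:ℝ), hL.le⟩)
        rw [← h] at this
        exact eq_of_dist_eq_zero (le_antisymm this dist_nonneg)
      have hev : γ =ᶠ[nhds (L/2)] fun _ => γ 0 := by
        have : Set.Ioo (0:ℝ) L ∈ nhds (L/2) :=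
          (isOpen_Ioo).mem_nhds ⟨by linarith, by linarith⟩
        filter_upwards [this] with x hx
        exact hconst x ⟨hx.1.le, hx.2.le⟩
      have : deriv γ (L/2) = 0 := by
        rw [hev.deriv_eq, deriv_const]
      have h10 := harc (L/2) ⟨by linarith, by linarith⟩
      rw [this, norm_zero] at h10
      exact one_ne_zero h10.symm
  -- integration by parts
  have hcA : Continuous fun s : ℝ => (⟪deriv γ s, deriv γ s⟫ : ℝ) := hcont1.inner hcont1
  have hcB : Continuous fun s : ℝ => (⟪deriv (deriv γ) s, γ s - γ 0⟫ : ℝ) :=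
    hcont2.inner (hcont0.sub continuous_const)
  have hIBP : (∫ s in (0:ℝ)..L,
      (⟪deriv γ s, deriv γ s⟫ + ⟪deriv (deriv γ) s, γ s - γ 0⟫))
      = ⟪deriv γ L, γ L - γ 0⟫ - ⟪deriv γ 0, γ 0 - γ 0⟫ := by
    apply intervalIntegral.integral_eq_sub_of_hasDerivAt
    · intro t _
      exact HasDerivAt.inner ℝ ((hdiff2 t).hasDerivAt)
        (((hdiff t).hasDerivAt).sub_const (γ 0))
    · exact (hcA.add hcB).intervalIntegrable 0 L
  have hInt1 : IntervalIntegrable (fun s => ⟪deriv γ s, deriv γ s⟫) volume 0 L :=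
    hcA.intervalIntegrable 0 L
  have hInt2 : IntervalIntegrable
      (fun s => ⟪deriv (deriv γ) s, γ s - γ 0⟫) volume 0 L :=
    hcB.intervalIntegrable 0 L
  rw [intervalIntegral.integral_add hInt1 hInt2] at hIBP
  have h1 : (∫ s in (0:ℝ)..L, ⟪deriv γ s, deriv γ s⟫) = L := by
    rw [intervalIntegral.integral_congr (g := fun _ => (1:ℝ))]
    · simp
    · intro s hs
      rw [Set.uIcc_of_le hL.le] at hs
      show ⟪deriv γ s, deriv γ s⟫ = (1:ℝ)
      rw [real_inner_self_eq_norm_sq, harc s hs]; norm_num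
  have hmain : (∫ s in (0:ℝ)..L, ⟪deriv (deriv γ) s, γ s - γ 0⟫) = -L := by
    have : γ L - γ 0 = 0 := by rw [← hclosed, sub_self]
    rw [this] at hIBP
    simp only [inner_zero_right, sub_self] at hIBP
    linarith
  -- bound the inner product
  have hnorm_le : ∀ s ∈ Set.Icc (0:ℝ) L, ‖γ s - γ 0‖ ≤ d := by
    intro s hs
    rw [← dist_eq_norm]
    exact Metric.dist_le_diam_of_mem ((isCompact_Icc.image hcont0).isBounded)
      (Set.mem_image_of_mem _ hs) (Set.mem_image_of_mem _ ⟨le_refl (0:ℝ), hL.le⟩)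
  set K := ∫ s in (0:ℝ)..L, ‖deriv (deriv γ) s‖ with hK
  have hstep : L ≤ d * K := by
    have hmono : (∫ s in (0:ℝ)..L, (-(d * ‖deriv (deriv γ) s‖)))
        ≤ ∫ s in (0:ℝ)..L, ⟪deriv (deriv γ) s, γ s - γ 0⟫ := by
      apply intervalIntegral.integral_mono_on hL.le
      · exact ((continuous_const.mul hcont2.norm).neg).intervalIntegrable 0 L
      · exact hInt2
      · intro s hs
        have ha := abs_real_inner_le_norm (deriv (deriv γ) s) (γ s - γ 0)
        have hb := hnorm_le s hs
        have hc := neg_abs_le ⟪deriv (deriv γ) s, γ s - γ 0⟫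
        nlinarith [norm_nonneg (deriv (deriv γ) s)]
    rw [hmain, intervalIntegral.integral_neg, intervalIntegral.integral_const_mul] at hmono
    linarith
  have hK0 : 0 < K := by nlinarith
  set A := ∫ s in (0:ℝ)..L, ‖deriv (deriv γ) s‖ ^ q with hA
  have hA0 : 0 ≤ A := by
    apply intervalIntegral.integral_nonneg hL.le
    intro s _
    exact Real.rpow_nonneg (norm_nonneg _) _
  rcases eq_or_lt_of_le hq with hq1 | hq1
  · -- q = 1
    have hAK : A = K := by
      simp only [hA, hK, ← hq1, Real.rpow_one]
    rw [← hq1, sub_self, Real.rpow_zero, hAK]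
    nlinarith
  · -- q > 1
    have hq0 : 0 < q := lt_trans zero_lt_one hq1
    set p' := q / (q - 1) with hp'
    have hpq : q.HolderConjugate p' := Real.HolderConjugate.conjExponent hq1
    haveI hfin : IsFiniteMeasure (volume.restrict (Set.Ioc (0:ℝ) L)) := by
      constructor
      rw [Measure.restrict_apply_univ, Real.volume_Ioc]
      exact ENNReal.ofReal_lt_top
    obtain ⟨C, hC⟩ := (isCompact_Icc (a := (0:ℝ)) (b := L)).exists_bound_of_continuousOn
      hcont2.continuousOn
    have hmemf : MemLp (fun s => ‖deriv (deriv γ) s‖) (ENNReal.ofReal q)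
        (volume.restrict (Set.Ioc (0:ℝ) L)) := by
      apply MemLp.of_bound (hcont2.norm.aestronglyMeasurable.restrict) C
      filter_upwards [ae_restrict_mem measurableSet_Ioc] with x hx
      rw [Real.norm_eq_abs, abs_norm]
      exact hC x (Set.Ioc_subset_Icc_self hx)
    have hmemg : MemLp (fun _ : ℝ => (1:ℝ)) (ENNReal.ofReal p')
        (volume.restrict (Set.Ioc (0:ℝ) L)) := memLp_const 1
    have hH := integral_mul_norm_le_Lp_mul_Lq hpq hmemf hmemg
    simp only [norm_one, norm_norm, mul_one, Real.one_rpow, integral_const, smul_eq_mul,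
      Measure.restrict_apply_univ, Real.volume_Ioc, sub_zero,
      ENNReal.toReal_ofReal hL.le] at hH
    have h1p' : 1 / p' = 1 - 1 / q := by
      have := hpq.inv_add_inv_eq_one
      rw [one_div, one_div]
      linarith
    rw [h1p'] at hH
    -- now hH : K' ≤ A'^(1/q) * L^(1-1/q) where K', A' are set integrals
    have hKK : K = ∫ s in Set.Ioc (0:ℝ) L, ‖deriv (deriv γ) s‖ := by
      rw [hK]; exact intervalIntegral.integral_of_le hL.le
    have hAA : A = ∫ s in Set.Ioc (0:ℝ) L, ‖deriv (deriv γ) s‖ ^ q := by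
      rw [hA]; exact intervalIntegral.integral_of_le hL.le
    rw [← hKK, ← hAA] at hH
    have hB0 : 0 ≤ A ^ (1/q) := Real.rpow_nonneg hA0 _
    have hLq : 0 < L ^ (1 - 1/q) := Real.rpow_pos_of_pos hL _
    have step1 : L ^ (1/q) ≤ d * A ^ (1/q) := by
      have hsplit : L ^ (1/q) * L ^ (1 - 1/q) = L := by
        rw [← Real.rpow_add hL]; norm_num
      have hchain : L ^ (1/q) * L ^ (1-1/q) ≤ (d * A^(1/q)) * L^(1-1/q) := by
        rw [hsplit]
        calc L ≤ d * K := hstep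
          _ ≤ d * (A^(1/q) * L^(1-1/q)) := mul_le_mul_of_nonneg_left (by
              have hvol : (volume.restrict (Ioc (0:ℝ) L)).real univ = L := by
                simp [Measure.real, Real.volume_Ioc, hL.le]
              rw [hvol] at hH; exact hH) hd0.le
          _ = (d * A^(1/q)) * L^(1-1/q) := by ring
      exact le_of_mul_le_mul_right hchain hLq
    have step2 : (L ^ (1/q)) ^ q ≤ (d * A^(1/q)) ^ q :=
      Real.rpow_le_rpow (Real.rpow_nonneg hL.le _) step1 hq0.le
    rw [← Real.rpow_mul hL.le, one_div_mul_cancel hq0.ne', Real.rpow_one,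
      Real.mul_rpow hd0.le hB0, ← Real.rpow_mul hA0, one_div_mul_cancel hq0.ne',
      Real.rpow_one] at step2
    -- step2 : L ≤ d^q * A
    have hdq : 0 < d ^ q := Real.rpow_pos_of_pos hd0 q
    rw [show (1 : ℝ) - q = 1 - q from rfl, Real.rpow_sub hd0, Real.rpow_one,
      div_le_iff₀ hdq]
    calc d ≤ L := hdL
      _ ≤ d ^ q * A := step2
      _ = A * d ^ q := mul_comm _ _
end

section
/- Let γ : [0, L] → ℝ² be a closed C² planar curve parametrized by arc length. Then L ≤ (diam γ) · ∫₀^L |γ''(s)| ds. In particular, since L ≥ diam γ, the total curvature ∫₀^L |γ''(s)| ds is at least 1. -/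
open Real MeasureTheory Set intervalIntegral

/-- For a closed C² planar curve `γ : [0,L] → ℝ²` parametrized by arc length,
`L ≤ (diam γ) · ∫₀^L |γ''|`, and in particular the total curvature is at least `1`. -/
theorem length_le_diam_mul_total_curvature (L : ℝ) (hL : 0 < L)
    (γ : ℝ → EuclideanSpace ℝ (Fin 2)) (hγ : ContDiff ℝ 2 γ)
    (hclosed : γ 0 = γ L) (harc : ∀ s ∈ Set.Icc (0:ℝ) L, ‖deriv γ s‖ = 1) :
    L ≤ Metric.diam (γ '' Set.Icc (0:ℝ) L) * ∫ s in (0:ℝ)..L, ‖deriv (deriv γ) s‖ ∧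
    1 ≤ ∫ s in (0:ℝ)..L, ‖deriv (deriv γ) s‖ := by
  have h2 : ContDiff ℝ (1+1) γ := by norm_num; exact hγ
  have hd1 : Differentiable ℝ γ := hγ.differentiable (by norm_num)
  have hcd1 : ContDiff ℝ 1 (deriv γ) := (contDiff_succ_iff_deriv.mp h2).2.2
  have hd2 : Differentiable ℝ (deriv γ) := hcd1.differentiable (by norm_num)
  have hc2 : Continuous (deriv (deriv γ)) := hcd1.continuous_deriv le_rfl
  have hc1 : Continuous (deriv γ) := hd2.continuous
  have hc0 : Continuous γ := hd1.continuous
  set d := Metric.diam (γ '' Set.Icc (0:ℝ) L) with hd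
  set f : ℝ → ℝ := fun s => inner ℝ (γ s - γ 0) (deriv γ s) with hf
  have hfd : ∀ s, HasDerivAt f
      (inner ℝ (γ s - γ 0) (deriv (deriv γ) s) + inner ℝ (deriv γ s) (deriv γ s)) s := by
    intro s
    exact ((hd1 s).hasDerivAt.sub_const (γ 0)).inner ℝ (hd2 s).hasDerivAt
  set g : ℝ → ℝ := fun s => inner ℝ (γ s - γ 0) (deriv (deriv γ) s)
    + inner ℝ (deriv γ s) (deriv γ s) with hg
  have hgc : Continuous g := by
    apply Continuous.add
    · exact (hc0.sub continuous_const).inner hc2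
    · exact hc1.inner hc1
  have hint : ∫ s in (0:ℝ)..L, g s = f L - f 0 := by
    exact integral_deriv_eq_sub' f (funext fun s => (hfd s).deriv)
      (fun s _ => (hfd s).differentiableAt) hgc.continuousOn
  have hf0 : f 0 = 0 := by simp [hf]
  have hfL : f L = 0 := by simp [hf, ← hclosed]
  -- ∫ inner ℝ (γ' s) (γ' s) = L
  have hIa : IntervalIntegrable (fun s => (inner ℝ (γ s - γ 0) (deriv (deriv γ) s) : ℝ))
      volume 0 L := ((hc0.sub continuous_const).inner hc2).intervalIntegrable _ _
  have hIb : IntervalIntegrable (fun s => (inner ℝ (deriv γ s) (deriv γ s) : ℝ))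
      volume 0 L := (hc1.inner hc1).intervalIntegrable _ _
  have hIc : IntervalIntegrable (fun s => ‖deriv (deriv γ) s‖) volume 0 L :=
    hc2.norm.intervalIntegrable _ _
  have hId : IntervalIntegrable (fun s => d * ‖deriv (deriv γ) s‖) volume 0 L :=
    hIc.const_mul d
  have hsplit : (∫ s in (0:ℝ)..L, (inner ℝ (γ s - γ 0) (deriv (deriv γ) s) : ℝ))
      + ∫ s in (0:ℝ)..L, (inner ℝ (deriv γ s) (deriv γ s) : ℝ) = 0 := by
    rw [← intervalIntegral.integral_add hIa hIb]
    have : ∫ s in (0:ℝ)..L, g s = 0 := by rw [hint, hf0, hfL]; ring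
    exact this
  have hone : (∫ s in (0:ℝ)..L, (inner ℝ (deriv γ s) (deriv γ s) : ℝ)) = L := by
    rw [intervalIntegral.integral_congr (g := fun _ => (1:ℝ))
      (fun s hs => by
        rw [Set.uIcc_of_le hL.le] at hs
        rw [real_inner_self_eq_norm_sq, harc s hs]; norm_num)]
    simp
  have hLe : L = ∫ s in (0:ℝ)..L, -(inner ℝ (γ s - γ 0) (deriv (deriv γ) s) : ℝ) := by
    rw [intervalIntegral.integral_neg]
    linarith [hsplit, hone]
  -- bound
  have hbdd : Bornology.IsBounded (γ '' Set.Icc (0:ℝ) L) :=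
    (isCompact_Icc.image hc0).isBounded
  have hnorm_le : ∀ s ∈ Set.Icc (0:ℝ) L, ‖γ s - γ 0‖ ≤ d := by
    intro s hs
    have := Metric.dist_le_diam_of_mem hbdd (Set.mem_image_of_mem γ hs)
      (Set.mem_image_of_mem γ (Set.left_mem_Icc.mpr hL.le))
    rwa [dist_eq_norm] at this
  have hmono : (∫ s in (0:ℝ)..L, -(inner ℝ (γ s - γ 0) (deriv (deriv γ) s) : ℝ))
      ≤ ∫ s in (0:ℝ)..L, d * ‖deriv (deriv γ) s‖ := by
    apply intervalIntegral.integral_mono_on hL.le hIa.neg hId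
    intro s hs
    calc -(inner ℝ (γ s - γ 0) (deriv (deriv γ) s) : ℝ)
        ≤ ‖γ s - γ 0‖ * ‖deriv (deriv γ) s‖ := by
          have := abs_real_inner_le_norm (γ s - γ 0) (deriv (deriv γ) s)
          have h2 := neg_abs_le (inner ℝ (γ s - γ 0) (deriv (deriv γ) s) : ℝ)
          linarith
      _ ≤ d * ‖deriv (deriv γ) s‖ :=
          mul_le_mul_of_nonneg_right (hnorm_le s hs) (norm_nonneg _)
  have hmain : L ≤ d * ∫ s in (0:ℝ)..L, ‖deriv (deriv γ) s‖ := by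
    calc L = ∫ s in (0:ℝ)..L, -(inner ℝ (γ s - γ 0) (deriv (deriv γ) s) : ℝ) := hLe
      _ ≤ ∫ s in (0:ℝ)..L, d * ‖deriv (deriv γ) s‖ := hmono
      _ = d * ∫ s in (0:ℝ)..L, ‖deriv (deriv γ) s‖ :=
          intervalIntegral.integral_const_mul d _
  refine ⟨hmain, ?_⟩
  have hdle : d ≤ L := by
    apply Metric.diam_le_of_forall_dist_le hL.le
    rintro x ⟨s, hs, rfl⟩ y ⟨t, ht, rfl⟩
    have hlip : ∀ u ∈ Set.Icc (0:ℝ) L, ∀ v ∈ Set.Icc (0:ℝ) L, ‖γ u - γ v‖ ≤ 1 * ‖u - v‖ :=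
      fun u hu v hv => (convex_Icc (0:ℝ) L).norm_image_sub_le_of_norm_deriv_le
        (fun x _ => hd1 x) (fun x hx => le_of_eq (harc x hx)) hv hu
    calc dist (γ s) (γ t) = ‖γ s - γ t‖ := dist_eq_norm _ _
      _ ≤ 1 * ‖s - t‖ := hlip s hs t ht
      _ ≤ L := by
          rw [one_mul]
          rw [Real.norm_eq_abs, abs_sub_le_iff]
          constructor <;> [linarith [hs.1, hs.2, ht.1, ht.2]; linarith [hs.1, hs.2, ht.1, ht.2]]
  have hInn : 0 ≤ ∫ s in (0:ℝ)..L, ‖deriv (deriv γ) s‖ :=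
    intervalIntegral.integral_nonneg hL.le (fun s _ => norm_nonneg _)
  nlinarith [hmain, hdle, hInn, Metric.diam_nonneg (s := γ '' Set.Icc (0:ℝ) L)]
end

section
/- There is a constant C > 0 (depending only on d) such that for all F ∈ ℝ^{d×d} and all R ∈ SO(d): | |sym(Rᵀ F - Id)| - dist(F, SO(d)) | ≤ C |F - R|², where sym(A) = (A + Aᵀ)/2. -/
open Real

/-- The Frobenius norm of a real `d × d` matrix. -/
noncomputable def frob {d : ℕ} (F : Matrix (Fin d) (Fin d) ℝ) : ℝ :=
  Real.sqrt (∑ i, ∑ j, (F i j)^2)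

/-- The special orthogonal group `SO(d)` as a set of matrices. -/
def SOd (d : ℕ) : Set (Matrix (Fin d) (Fin d) ℝ) :=
  {R | R.transpose * R = 1 ∧ R.det = 1}

/-- The Frobenius distance of a matrix to `SO(d)`. -/
noncomputable def distSO {d : ℕ} (F : Matrix (Fin d) (Fin d) ℝ) : ℝ :=
  sInf ((fun R => frob (F - R)) '' SOd d)

/-- The symmetric part `sym(A) = (A + Aᵀ)/2` of a matrix. -/
noncomputable def symPart {d : ℕ} (A : Matrix (Fin d) (Fin d) ℝ) : Matrix (Fin d) (Fin d) ℝ :=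
  (1/2 : ℝ) • (A + A.transpose)

section Aux

open scoped Matrix
open NormedSpace

attribute [local instance] Matrix.frobeniusSeminormedAddCommGroup
  Matrix.frobeniusNormedAddCommGroup Matrix.frobeniusNormedSpace
  Matrix.frobeniusNormedRing Matrix.frobeniusNormedAlgebra

set_option maxHeartbeats 4000000

variable {d : ℕ}

lemma frob_eq_norm (F : Matrix (Fin d) (Fin d) ℝ) : frob F = ‖F‖ := by
  rw [Matrix.frobenius_norm_def]
  rw [show frob F = (∑ i, ∑ j, (F i j)^2) ^ ((1:ℝ)/2) from Real.sqrt_eq_rpow _]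
  congr 1
  refine Finset.sum_congr rfl fun i _ => Finset.sum_congr rfl fun j _ => ?_
  rw [Real.rpow_two, Real.norm_eq_abs, sq_abs]

lemma norm_sq_eq_trace (M : Matrix (Fin d) (Fin d) ℝ) :
    ‖M‖ ^ 2 = (Mᵀ * M).trace := by
  have h : ‖M‖ = Real.sqrt (∑ i, ∑ j, (M i j)^2) := (frob_eq_norm M).symm
  rw [h, Real.sq_sqrt (by positivity)]
  rw [Matrix.trace]
  simp only [Matrix.diag_apply, Matrix.mul_apply, Matrix.transpose_apply, sq]
  exact Finset.sum_comm

lemma norm_orth_mul {R : Matrix (Fin d) (Fin d) ℝ} (hR : Rᵀ * R = 1)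
    (X : Matrix (Fin d) (Fin d) ℝ) : ‖R * X‖ = ‖X‖ := by
  have h2 : ‖R * X‖ ^ 2 = ‖X‖ ^ 2 := by
    rw [norm_sq_eq_trace, norm_sq_eq_trace, Matrix.transpose_mul, Matrix.mul_assoc,
      ← Matrix.mul_assoc Rᵀ, hR, Matrix.one_mul]
  rw [← Real.sqrt_sq (norm_nonneg (R*X)), ← Real.sqrt_sq (norm_nonneg X), h2]

lemma norm_orth {R : Matrix (Fin d) (Fin d) ℝ} (hR : Rᵀ * R = 1) :
    ‖R‖ = Real.sqrt d := by
  have : ‖R‖ ^ 2 = (d : ℝ) := by rw [norm_sq_eq_trace, hR, Matrix.trace_one]; simp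
  rw [← this, Real.sqrt_sq (norm_nonneg _)]

lemma norm_symPart_le (X : Matrix (Fin d) (Fin d) ℝ) : ‖symPart X‖ ≤ ‖X‖ := by
  rw [symPart, norm_smul]
  have h1 : ‖X + Xᵀ‖ ≤ ‖X‖ + ‖Xᵀ‖ := norm_add_le _ _
  rw [Matrix.frobenius_norm_transpose] at h1
  rw [Real.norm_eq_abs, abs_of_nonneg (by norm_num : (0:ℝ) ≤ 1/2)]
  nlinarith [norm_nonneg (X + Xᵀ)]

lemma symPart_add (X Y : Matrix (Fin d) (Fin d) ℝ) :
    symPart (X + Y) = symPart X + symPart Y := by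
  rw [symPart, symPart, symPart, Matrix.transpose_add, ← smul_add]
  congr 1
  abel

lemma two_pow_le_fact (n : ℕ) : (2:ℕ)^n ≤ Nat.factorial (n+2) := by
  induction n with
  | zero => decide
  | succ n ih =>
    calc (2:ℕ)^(n+1) = 2 * 2^n := by ring
    _ ≤ 2 * Nat.factorial (n+2) := by omega
    _ ≤ (n+3) * Nat.factorial (n+2) := by have := Nat.factorial_pos (n+2); nlinarith
    _ = Nat.factorial (n+3) := rfl

lemma exp_remainder {x : Matrix (Fin d) (Fin d) ℝ} (hx : ‖x‖ ≤ 1) :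
    ‖NormedSpace.exp x - 1 - x‖ ≤ 3 * ‖x‖^2 := by
  have hsum : Summable fun n : ℕ => ((Nat.factorial n:ℝ)⁻¹) • x ^ n := expSeries_summable' x
  have h0 : NormedSpace.exp x = ∑' n : ℕ, ((Nat.factorial n:ℝ)⁻¹) • x ^ n := by rw [NormedSpace.exp_eq_tsum ℝ]
  have hsum1 : Summable fun n : ℕ => ((Nat.factorial (n+1) :ℝ)⁻¹) • x ^ (n+1) :=
    (summable_nat_add_iff 1).2 hsum
  have hsum2 : Summable fun n : ℕ => ((Nat.factorial (n+2) :ℝ)⁻¹) • x ^ (n+2) :=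
    (summable_nat_add_iff 2).2 hsum
  have key : NormedSpace.exp x - 1 - x = ∑' n : ℕ, ((Nat.factorial (n+2) :ℝ)⁻¹) • x ^ (n+2) := by
    rw [h0, Summable.tsum_eq_zero_add hsum]
    rw [Summable.tsum_eq_zero_add hsum1]
    simp [Nat.factorial]
    try abel
  rw [key]
  have hb : ∀ n : ℕ, ‖((Nat.factorial (n+2) :ℝ)⁻¹) • x ^ (n+2)‖ ≤ ‖x‖^2 * (1/2)^n := by
    intro n
    rw [norm_smul]
    have h1 : ‖x ^ (n+2)‖ ≤ ‖x‖^(n+2) := norm_pow_le' x (by omega)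
    have h2 : ‖x‖^(n+2) ≤ ‖x‖^2 := by
      calc ‖x‖^(n+2) = ‖x‖^2 * ‖x‖^n := by ring
      _ ≤ ‖x‖^2 * 1 := by
          have := pow_le_one₀ (norm_nonneg x) hx (n := n)
          nlinarith [sq_nonneg ‖x‖]
      _ = ‖x‖^2 := by ring
    have h3 : (((Nat.factorial (n+2):ℝ))⁻¹) ≤ (1/2)^n := by
      have h4 : (2:ℝ)^n ≤ (Nat.factorial (n+2) : ℝ) := by exact_mod_cast two_pow_le_fact n
      have h6 : (0:ℝ) < 2^n := by positivity
      have h7 := inv_anti₀ h6 h4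
      calc ((Nat.factorial (n+2):ℝ))⁻¹ ≤ ((2:ℝ)^n)⁻¹ := h7
      _ = (1/2)^n := by rw [← inv_pow]; norm_num
    have h5 : ‖((Nat.factorial (n+2) :ℝ)⁻¹)‖ = ((Nat.factorial (n+2):ℝ))⁻¹ := by
      rw [Real.norm_eq_abs, abs_of_nonneg]; positivity
    rw [h5]
    calc ((Nat.factorial (n+2):ℝ))⁻¹ * ‖x^(n+2)‖ ≤ (1/2)^n * ‖x‖^2 := by
          apply mul_le_mul h3 (h1.trans h2) (norm_nonneg _) (by positivity)
    _ = ‖x‖^2 * (1/2)^n := by ring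
  have hgeo : Summable fun n : ℕ => ‖x‖^2 * (1/2:ℝ)^n :=
    (summable_geometric_of_lt_one (by norm_num) (by norm_num)).mul_left _
  calc ‖∑' n : ℕ, ((Nat.factorial (n+2) :ℝ)⁻¹) • x ^ (n+2)‖
      ≤ ∑' n : ℕ, ‖((Nat.factorial (n+2) :ℝ)⁻¹) • x ^ (n+2)‖ := norm_tsum_le_tsum_norm hsum2.norm
    _ ≤ ∑' n : ℕ, ‖x‖^2 * (1/2:ℝ)^n := Summable.tsum_le_tsum hb hsum2.norm hgeo
    _ = ‖x‖^2 * (1/(1-1/2)) := by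
        rw [tsum_mul_left, tsum_geometric_of_lt_one (by norm_num) (by norm_num)]
        norm_num
    _ ≤ 3 * ‖x‖^2 := by nlinarith [sq_nonneg ‖x‖]

lemma exp_skew_orth {W : Matrix (Fin d) (Fin d) ℝ} (hW : Wᵀ = -W) :
    (NormedSpace.exp W)ᵀ * NormedSpace.exp W = 1 := by
  rw [← Matrix.exp_transpose, hW]
  rw [← Matrix.exp_add_of_commute _ _ (Commute.neg_left (Commute.refl W))]
  simp [NormedSpace.exp_zero]

lemma exp_skew_det {W : Matrix (Fin d) (Fin d) ℝ} (hW : Wᵀ = -W) :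
    (NormedSpace.exp W).det = 1 := by
  set g : ℝ → ℝ := fun t => (NormedSpace.exp (t • W)).det with hg
  have hcont : Continuous g := by
    apply Continuous.matrix_det
    exact exp_continuous.comp (continuous_id.smul continuous_const)
  have hsq : ∀ t : ℝ, g t ^ 2 = 1 := by
    intro t
    have hskew : (t • W)ᵀ = -(t • W) := by rw [Matrix.transpose_smul, hW]; simp
    have := exp_skew_orth hskew
    have hdet := congrArg Matrix.det this
    rw [Matrix.det_mul, Matrix.det_transpose, Matrix.det_one] at hdet
    rw [hg]; simp only []
    nlinarith [hdet]
  have hg0 : g 0 = 1 := by simp [hg, NormedSpace.exp_zero]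
  have hg1 : g 1 = (NormedSpace.exp W).det := by simp [hg]
  by_contra hne
  have hgat1 : g 1 = -1 := by
    have := hsq 1
    rw [hg1] at this ⊢
    rcases sq_eq_one_iff.mp this with h | h
    · exact absurd h hne
    · exact h
  have : (0:ℝ) ∈ Set.Icc (g 1) (g 0) := by rw [hg0, hgat1]; norm_num
  obtain ⟨t, _, ht⟩ := intermediate_value_Icc' (by norm_num : (0:ℝ) ≤ 1) hcont.continuousOn this
  have := hsq t
  rw [ht] at this
  norm_num at this

lemma one_mem_SOd : (1 : Matrix (Fin d) (Fin d) ℝ) ∈ SOd d :=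
  ⟨by rw [Matrix.transpose_one, Matrix.one_mul], Matrix.det_one⟩

lemma distSO_bddBelow (F : Matrix (Fin d) (Fin d) ℝ) :
    BddBelow ((fun R => frob (F - R)) '' SOd d) := by
  refine ⟨0, fun x hx => ?_⟩
  obtain ⟨Q, _, rfl⟩ := hx
  exact Real.sqrt_nonneg _

lemma distSO_le {F Q : Matrix (Fin d) (Fin d) ℝ} (hQ : Q ∈ SOd d) :
    distSO F ≤ frob (F - Q) :=
  csInf_le (distSO_bddBelow F) ⟨Q, hQ, rfl⟩

lemma le_distSO {F : Matrix (Fin d) (Fin d) ℝ} {c : ℝ}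
    (h : ∀ Q ∈ SOd d, c ≤ frob (F - Q)) : c ≤ distSO F :=
  le_csInf ⟨_, ⟨1, one_mem_SOd, rfl⟩⟩ (by rintro b ⟨Q, hQ, rfl⟩; exact h Q hQ)

lemma distSO_nonneg (F : Matrix (Fin d) (Fin d) ℝ) : 0 ≤ distSO F :=
  le_csInf ⟨_, ⟨1, one_mem_SOd, rfl⟩⟩ (by rintro b ⟨Q, hQ, rfl⟩; exact Real.sqrt_nonneg _)

/-- Linearization formula: there is `C > 0` (depending only on `d`) with
`| |sym(Rᵀ F − Id)| − dist(F, SO(d)) | ≤ C |F − R|²` for all `F` and all `R ∈ SO(d)`. -/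
theorem linearization_formula_SO (d : ℕ) :
    ∃ C > (0:ℝ), ∀ (F R : Matrix (Fin d) (Fin d) ℝ), R ∈ SOd d →
      |frob (symPart (R.transpose * F - 1)) - distSO F| ≤ C * (frob (F - R))^2 := by
  refine ⟨2 * Real.sqrt d + 3, by positivity, ?_⟩
  intro F R hR
  obtain ⟨hR1, hRdet⟩ := hR
  set A : Matrix (Fin d) (Fin d) ℝ := Rᵀ * F - 1 with hA
  have hRRt : R * Rᵀ = 1 := mul_eq_one_comm.mp hR1
  have hRt1 : (Rᵀ)ᵀ * Rᵀ = 1 := by rw [Matrix.transpose_transpose]; exact hRRt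
  have hFR : F - R = R * A := by
    rw [hA, Matrix.mul_sub, ← Matrix.mul_assoc, hRRt, Matrix.one_mul, Matrix.mul_one]
  have hnormFR : frob (F - R) = ‖A‖ := by rw [frob_eq_norm, hFR, norm_orth_mul hR1]
  have hsymle : ‖symPart A‖ ≤ ‖A‖ := norm_symPart_le A
  set C : ℝ := 2 * Real.sqrt d + 3 with hC
  have hCge : 3 ≤ C := by
    rw [hC]; nlinarith [Real.sqrt_nonneg (d:ℝ)]
  have hCA : 0 ≤ C * ‖A‖^2 := mul_nonneg (by linarith) (sq_nonneg _)
  -- lower bound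
  have hlow : ‖symPart A‖ - C * ‖A‖^2 ≤ distSO F := by
    apply le_distSO
    intro Q hQ
    rw [frob_eq_norm]
    by_cases hcase : ‖A‖ ≤ ‖F - Q‖
    · linarith
    · push_neg at hcase
      obtain ⟨hQ1, _⟩ := hQ
      set B : Matrix (Fin d) (Fin d) ℝ := Rᵀ * Q with hB
      have hBorth : Bᵀ * B = 1 := by
        rw [hB, Matrix.transpose_mul, Matrix.transpose_transpose, Matrix.mul_assoc,
          ← Matrix.mul_assoc R, hRRt, Matrix.one_mul, hQ1]
      have hdecomp : symPart A = symPart (Rᵀ * (F - Q)) + symPart (B - 1) := by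
        rw [← symPart_add]
        congr 1
        rw [hA, hB, Matrix.mul_sub]
        abel
      have hkey : Bᵀ * ((B - 1) * (B - 1)) = (B - 1) + (B - 1)ᵀ := by
        have e1 : Bᵀ * ((B - 1) * (B - 1)) = Bᵀ * B * B - Bᵀ * B - Bᵀ * B + Bᵀ := by
          noncomm_ring
        rw [e1, hBorth, Matrix.one_mul, Matrix.transpose_sub, Matrix.transpose_one]
        noncomm_ring
      have hsymB : symPart (B - 1) = (1/2 : ℝ) • (Bᵀ * ((B - 1) * (B - 1))) := by
        rw [symPart, hkey]
      have hnB : ‖B‖ = Real.sqrt d := norm_orth hBorth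
      have hnB1 : ‖B - 1‖ = ‖Q - R‖ := by
        have e2 : B - 1 = Rᵀ * (Q - R) := by rw [hB, Matrix.mul_sub, hR1]
        rw [e2, norm_orth_mul hRt1]
      have hQR : ‖Q - R‖ ≤ 2 * ‖A‖ := by
        have h1 : Q - R = (Q - F) + (F - R) := by abel
        have h2 : ‖Q - R‖ ≤ ‖Q - F‖ + ‖F - R‖ := h1 ▸ norm_add_le _ _
        rw [norm_sub_rev Q F] at h2
        have h3 : ‖F - R‖ = ‖A‖ := by rw [hFR, norm_orth_mul hR1]
        linarith
      have hb2 : ‖symPart (B - 1)‖ ≤ Real.sqrt d / 2 * ‖B - 1‖^2 := by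
        rw [hsymB, norm_smul, Real.norm_eq_abs, abs_of_nonneg (by norm_num : (0:ℝ) ≤ 1/2)]
        have h4 : ‖Bᵀ * ((B - 1) * (B - 1))‖ ≤ ‖Bᵀ‖ * (‖B - 1‖ * ‖B - 1‖) := by
          calc ‖Bᵀ * ((B - 1) * (B - 1))‖ ≤ ‖Bᵀ‖ * ‖(B - 1) * (B - 1)‖ := norm_mul_le _ _
          _ ≤ ‖Bᵀ‖ * (‖B - 1‖ * ‖B - 1‖) := by
              have := norm_mul_le (B - 1) (B - 1)
              have hnn : (0:ℝ) ≤ ‖Bᵀ‖ := norm_nonneg _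
              nlinarith
        rw [Matrix.frobenius_norm_transpose, hnB] at h4
        nlinarith [Real.sqrt_nonneg (d:ℝ), norm_nonneg (B - 1)]
      have hb1 : ‖symPart (Rᵀ * (F - Q))‖ ≤ ‖F - Q‖ := by
        calc ‖symPart (Rᵀ * (F - Q))‖ ≤ ‖Rᵀ * (F - Q)‖ := norm_symPart_le _
        _ = ‖F - Q‖ := norm_orth_mul hRt1 _
      have htot : ‖symPart A‖ ≤ ‖F - Q‖ + Real.sqrt d / 2 * (2 * ‖A‖)^2 := by
        rw [hdecomp]
        have h5 := norm_add_le (symPart (Rᵀ * (F - Q))) (symPart (B - 1))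
        have h6 : ‖B - 1‖^2 ≤ (2 * ‖A‖)^2 := by
          rw [hnB1]; nlinarith [norm_nonneg (Q - R), norm_nonneg A]
        nlinarith [Real.sqrt_nonneg (d:ℝ)]
      nlinarith [htot, sq_nonneg ‖A‖, mul_nonneg (Real.sqrt_nonneg (d:ℝ)) (sq_nonneg ‖A‖)]
  -- upper bound
  have hup : distSO F ≤ ‖symPart A‖ + C * ‖A‖^2 := by
    by_cases hA1 : ‖A‖ ≤ 1
    · set W : Matrix (Fin d) (Fin d) ℝ := (1/2 : ℝ) • (A - Aᵀ) with hW
      have hWskew : Wᵀ = -W := by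
        rw [hW, Matrix.transpose_smul, Matrix.transpose_sub, Matrix.transpose_transpose,
          ← smul_neg]
        congr 1
        abel
      have hWle : ‖W‖ ≤ ‖A‖ := by
        rw [hW, norm_smul, Real.norm_eq_abs, abs_of_nonneg (by norm_num : (0:ℝ) ≤ 1/2)]
        have h1 := norm_sub_le A Aᵀ
        rw [Matrix.frobenius_norm_transpose] at h1
        linarith
      set E := NormedSpace.exp W with hE
      have hEorth : Eᵀ * E = 1 := exp_skew_orth hWskew
      have hQmem : R * E ∈ SOd d := by
        constructor
        · show (R * E)ᵀ * (R * E) = 1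
          rw [Matrix.transpose_mul, Matrix.mul_assoc, ← Matrix.mul_assoc Rᵀ R E, hR1,
            Matrix.one_mul, hEorth]
        · show (R * E).det = 1
          rw [Matrix.det_mul, hRdet, exp_skew_det hWskew, one_mul]
      have h6 : distSO F ≤ frob (F - R * E) := distSO_le hQmem
      have h7 : F - R * E = R * (1 + A - E) := by
        have e3 : R * (1 + A - E) = R * 1 + R * A - R * E := by noncomm_ring
        rw [e3, Matrix.mul_one, ← hFR]
        abel
      have h8 : frob (F - R * E) = ‖1 + A - E‖ := by rw [frob_eq_norm, h7, norm_orth_mul hR1]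
      have h9 : (1 : Matrix (Fin d) (Fin d) ℝ) + A - E = symPart A - (E - 1 - W) := by
        have hsplit : A = symPart A + W := by
          rw [symPart, hW, ← smul_add]
          rw [show A + Aᵀ + (A - Aᵀ) = (2:ℝ) • A by module]
          rw [smul_smul]
          norm_num
        nth_rewrite 1 [hsplit]
        abel
      have h10 : ‖(1 : Matrix (Fin d) (Fin d) ℝ) + A - E‖ ≤ ‖symPart A‖ + 3 * ‖W‖^2 := by
        rw [h9]
        have h11 := exp_remainder (hWle.trans hA1)
        have h12 := norm_sub_le (symPart A) (E - 1 - W)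
        rw [← hE] at h11
        linarith
      have hW2 : ‖W‖^2 ≤ ‖A‖^2 := by nlinarith [norm_nonneg W, norm_nonneg A]
      calc distSO F ≤ frob (F - R * E) := h6
      _ = ‖1 + A - E‖ := h8
      _ ≤ ‖symPart A‖ + 3 * ‖W‖^2 := h10
      _ ≤ ‖symPart A‖ + C * ‖A‖^2 := by nlinarith [Real.sqrt_nonneg (d:ℝ), sq_nonneg ‖A‖]
    · push_neg at hA1
      have h6 : distSO F ≤ ‖A‖ := by
        have h7 := distSO_le (F := F) (Q := R) ⟨hR1, hRdet⟩
        rw [hnormFR] at h7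
        exact h7
      nlinarith [norm_nonneg (symPart A), norm_nonneg A]
  rw [frob_eq_norm (symPart A), hnormFR]
  rw [abs_le]
  constructor <;> [linarith; linarith]

end Aux
end

section
/- Let L ⊂ ℝ³ be an affine plane with unit normal ν = (ν₁,ν₂,ν₃) satisfying |ν₃| ≤ √(1-θ²) for some θ ∈ (0,1), let ρ > 0, η > 0, and let W = (L)_{3ηρ} ∩ ∂Q_{(1+6η)ρ} ∩ {x₃ = (1+6η)ρ/2}, where (L)_{3ηρ} is the open 3ηρ-neighborhood of L and Q_{(1+6η)ρ} the cube of sidelength (1+6η)ρ centered at 0. Then ℋ²(W) ≤ C η ρ² / θ for an absolute constant C > 0. -/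
open Set MeasureTheory Real RealInnerProductSpace
open scoped NNReal ENNReal

lemma strip_volume_le (a0 a1 d w s t : ℝ) (ht : 0 < t) (hta : t ≤ |a1|)
    (hw : 0 ≤ w) :
    volume {p : ℝ × ℝ | |p.1 * a0 + p.2 * a1 + d| ≤ w ∧ |p.1| ≤ s}
      ≤ ENNReal.ofReal (2 * s) * ENNReal.ofReal (2 * (w / t)) := by
  set T : Set (ℝ × ℝ) := {p : ℝ × ℝ | |p.1 * a0 + p.2 * a1 + d| ≤ w ∧ |p.1| ≤ s} with hT
  have hTm : MeasurableSet T := by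
    have h1 : Measurable fun p : ℝ × ℝ => |p.1 * a0 + p.2 * a1 + d| := by fun_prop
    have h2 : Measurable fun p : ℝ × ℝ => |p.1| := by fun_prop
    exact (h1 measurableSet_Iic).inter (h2 measurableSet_Iic)
  rw [Measure.volume_eq_prod, Measure.prod_apply hTm]
  have key : ∀ a : ℝ, volume (Prod.mk a ⁻¹' T)
      ≤ (Icc (-s) s).indicator (fun _ => ENNReal.ofReal (2 * (w / t))) a := by
    intro a
    by_cases ha : |a| ≤ s
    · have hsub : Prod.mk a ⁻¹' T ⊆ Metric.closedBall (-(a * a0 + d) / a1) (w / t) := by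
        intro b hb
        obtain ⟨h1, -⟩ := hb
        rw [Metric.mem_closedBall, Real.dist_eq]
        have ha1 : a1 ≠ 0 := by
          intro h; rw [h, abs_zero] at hta; linarith
        have he : b - -(a * a0 + d) / a1 = (a * a0 + b * a1 + d) / a1 := by
          field_simp; ring
        rw [he, abs_div]
        exact div_le_div₀ hw h1 ht hta
      refine le_trans (measure_mono hsub) ?_
      rw [Real.volume_closedBall]
      rw [indicator_of_mem (by rw [mem_Icc]; constructor <;> [linarith [abs_le.mp ha]; linarith [abs_le.mp ha]])]
    · have : Prod.mk a ⁻¹' T = ∅ := by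
        ext b; simp only [mem_preimage, hT, mem_setOf_eq, mem_empty_iff_false, iff_false]
        intro hb; exact ha hb.2
      rw [this, measure_empty,
        indicator_of_notMem (by rw [mem_Icc]; intro hm; exact ha (abs_le.mpr ⟨hm.1, hm.2⟩))]
  calc ∫⁻ a, volume (Prod.mk a ⁻¹' T) ≤ ∫⁻ a, (Icc (-s) s).indicator (fun _ => ENNReal.ofReal (2 * (w / t))) a :=
        lintegral_mono key
    _ = ENNReal.ofReal (2 * (w / t)) * volume (Icc (-s) s) := by
        rw [lintegral_indicator_const measurableSet_Icc]
    _ = ENNReal.ofReal (2 * s) * ENNReal.ofReal (2 * (w / t)) := by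
        rw [Real.volume_Icc, mul_comm]
        congr 2; ring


/-- Embedding of the plane `{x₃ = h}` into `ℝ³`. -/
noncomputable def topFaceEmb (h : ℝ) : ℝ × ℝ → EuclideanSpace ℝ (Fin 3) :=
  fun p => (WithLp.equiv 2 (Fin 3 → ℝ)).symm ![p.1, p.2, h]

lemma topFaceEmb_apply0 (h : ℝ) (p : ℝ × ℝ) : topFaceEmb h p 0 = p.1 := rfl
lemma topFaceEmb_apply1 (h : ℝ) (p : ℝ × ℝ) : topFaceEmb h p 1 = p.2 := rfl
lemma topFaceEmb_apply2 (h : ℝ) (p : ℝ × ℝ) : topFaceEmb h p 2 = h := rfl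

lemma topFaceEmb_lipschitz (h : ℝ) : LipschitzWith 2 (topFaceEmb h) := by
  apply LipschitzWith.of_dist_le_mul
  intro p q
  have hd : dist (topFaceEmb h p) (topFaceEmb h q)
      = Real.sqrt (dist p.1 q.1^2 + dist p.2 q.2^2 + dist h h^2) := by
    rw [EuclideanSpace.dist_eq, Fin.sum_univ_three]
    rfl
  rw [hd, dist_self]
  have h1 : dist p.1 q.1 ≤ dist p q := by rw [Prod.dist_eq]; exact le_max_left _ _
  have h2 : dist p.2 q.2 ≤ dist p q := by rw [Prod.dist_eq]; exact le_max_right _ _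
  have h3 : Real.sqrt (dist p.1 q.1^2 + dist p.2 q.2^2 + 0^2)
      ≤ Real.sqrt ((2 * dist p q)^2) := by
    apply Real.sqrt_le_sqrt
    nlinarith [dist_nonneg (x := p.1) (y := q.1), dist_nonneg (x := p.2) (y := q.2),
      dist_nonneg (x := p) (y := q)]
  rw [Real.sqrt_sq (by positivity)] at h3
  have hc2 : ((2:ℝ≥0):ℝ) = 2 := by norm_num
  rw [hc2]
  exact h3

set_option maxHeartbeats 1000000 in
/-- There is an absolute constant `C > 0` such that for every plane
`L = {y : ⟪y, ν⟫ = c}` with `|ν₃| ≤ √(1 − θ²)`, the portion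
`W = (L)_{3ηρ} ∩ ∂Q_{(1+6η)ρ} ∩ {x₃ = (1+6η)ρ/2}` of the top face of the cube within
distance `3ηρ` of `L` satisfies `ℋ²(W) ≤ C η ρ² / θ`. -/
theorem top_face_strip_area_estimate :
    ∃ C > (0:ℝ), ∀ (θ ρ η : ℝ), θ ∈ Set.Ioo (0:ℝ) 1 → 0 < ρ → 0 < η → η ≤ 1 →
      ∀ (ν : EuclideanSpace ℝ (Fin 3)) (c : ℝ), ‖ν‖ = 1 →
        |ν 2| ≤ Real.sqrt (1 - θ^2) →
        μH[2] ({x : EuclideanSpace ℝ (Fin 3) |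
              Metric.infDist x {y : EuclideanSpace ℝ (Fin 3) | ⟪y, ν⟫ = c} < 3*η*ρ}
            ∩ frontier {x : EuclideanSpace ℝ (Fin 3) | ∀ i, |x i| ≤ (1+6*η)*ρ/2}
            ∩ {x : EuclideanSpace ℝ (Fin 3) | x 2 = (1+6*η)*ρ/2})
          ≤ ENNReal.ofReal (C * η * ρ^2 / θ) := by
  refine ⟨300, by norm_num, ?_⟩
  rintro θ ρ η ⟨hθ0, hθ1⟩ hρ hη hη1 ν c hν hν2
  set s : ℝ := (1+6*η)*ρ/2 with hs_def
  set w : ℝ := 3*η*ρ with hw_def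
  set t : ℝ := θ / Real.sqrt 2 with ht_def
  have hs0 : 0 ≤ s := by positivity
  have hw0 : 0 ≤ w := by positivity
  have hsqrt2 : (0:ℝ) < Real.sqrt 2 := by positivity
  have ht0 : 0 < t := by positivity
  have hsum : (ν 0)^2 + (ν 1)^2 + (ν 2)^2 = 1 := by
    have h2 : Real.sqrt (∑ i, ‖ν i‖^2) = 1 := by
      rw [← EuclideanSpace.norm_eq ν, hν]
    have hnn : (0:ℝ) ≤ ∑ i : Fin 3, ‖ν i‖^2 :=
      Finset.sum_nonneg fun i _ => by positivity
    have h3 : (∑ i : Fin 3, ‖ν i‖^2) = 1 := by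
      nlinarith [Real.sq_sqrt hnn]
    simpa [Fin.sum_univ_three, Real.norm_eq_abs, sq_abs] using h3
  have hθ2 : (ν 2)^2 ≤ 1 - θ^2 := by
    have h1 : (0:ℝ) ≤ 1 - θ^2 := by nlinarith
    nlinarith [Real.sq_sqrt h1, abs_nonneg (ν 2), sq_abs (ν 2)]
  have h01 : θ^2 ≤ (ν 0)^2 + (ν 1)^2 := by nlinarith
  have ht2 : t^2 = θ^2/2 := by
    rw [ht_def, div_pow, Real.sq_sqrt (by norm_num : (0:ℝ) ≤ 2)]
  set d : ℝ := s * ν 2 - c with hd_def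
  set T : Set (ℝ × ℝ) :=
    {p : ℝ × ℝ | |p.1 * ν 0 + p.2 * ν 1 + d| ≤ w ∧ |p.1| ≤ s ∧ |p.2| ≤ s} with hT_def
  have hQclosed : IsClosed {x : EuclideanSpace ℝ (Fin 3) | ∀ i, |x i| ≤ (1+6*η)*ρ/2} := by
    have heq : {x : EuclideanSpace ℝ (Fin 3) | ∀ i, |x i| ≤ (1+6*η)*ρ/2}
        = ⋂ i, {x : EuclideanSpace ℝ (Fin 3) | |x i| ≤ (1+6*η)*ρ/2} := by
      ext x; simp
    rw [heq]
    exact isClosed_iInter fun i =>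
      isClosed_le ((EuclideanSpace.proj i (𝕜 := ℝ)).continuous.abs) continuous_const
  have hLne : ({y : EuclideanSpace ℝ (Fin 3) | ⟪y, ν⟫ = c} : Set _).Nonempty := by
    refine ⟨c • ν, ?_⟩
    simp only [mem_setOf_eq, real_inner_smul_left, real_inner_self_eq_norm_sq, hν]
    ring
  have hW : ({x : EuclideanSpace ℝ (Fin 3) |
              Metric.infDist x {y : EuclideanSpace ℝ (Fin 3) | ⟪y, ν⟫ = c} < 3*η*ρ}
            ∩ frontier {x : EuclideanSpace ℝ (Fin 3) | ∀ i, |x i| ≤ (1+6*η)*ρ/2}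
            ∩ {x : EuclideanSpace ℝ (Fin 3) | x 2 = (1+6*η)*ρ/2}) ⊆ topFaceEmb s '' T := by
    rintro x ⟨⟨hdist, hfr⟩, hx2⟩
    simp only [mem_setOf_eq] at hdist hx2
    have hxQ : ∀ i, |x i| ≤ (1+6*η)*ρ/2 :=
      (frontier_subset_iff_isClosed.mpr hQclosed) hfr
    have hinner : |⟪x, ν⟫ - c| ≤ w := by
      obtain ⟨y, hyL, hxy⟩ := (Metric.infDist_lt_iff hLne).mp hdist
      have hcs := abs_real_inner_le_norm (x - y) ν
      rw [inner_sub_left, hν, mul_one, hyL, ← dist_eq_norm] at hcs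
      rw [hw_def]; linarith
    have hinner2 : ⟪x, ν⟫ = x 0 * ν 0 + x 1 * ν 1 + x 2 * ν 2 := by
      simp [PiLp.inner_apply, RCLike.inner_apply, conj_trivial, Fin.sum_univ_three]
      ring
    refine ⟨(x 0, x 1), ⟨?_, hxQ 0, hxQ 1⟩, ?_⟩
    · have heq : x 0 * ν 0 + x 1 * ν 1 + d = ⟪x, ν⟫ - c := by
        rw [hinner2, hd_def, hx2]; ring
      rw [heq]; exact hinner
    · ext i
      fin_cases i
      · exact topFaceEmb_apply0 s (x 0, x 1)
      · exact topFaceEmb_apply1 s (x 0, x 1)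
      · exact (topFaceEmb_apply2 s (x 0, x 1)).trans hx2.symm
  have hf : LipschitzWith 2 (topFaceEmb s) := topFaceEmb_lipschitz s
  have hvol : volume T ≤ ENNReal.ofReal (2*s) * ENNReal.ofReal (2*(w/t)) := by
    by_cases hcase : t ≤ |ν 1|
    · refine le_trans (measure_mono ?_) (strip_volume_le (ν 0) (ν 1) d w s t ht0 hcase hw0)
      rintro p ⟨h1, h2, -⟩; exact ⟨h1, h2⟩
    · have hc0 : t ≤ |ν 0| := by
        push_neg at hcase
        have h4 : t^2 ≤ (ν 0)^2 := by nlinarith [sq_abs (ν 1), abs_nonneg (ν 1)]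
        have h5 := Real.sqrt_le_sqrt h4
        rwa [Real.sqrt_sq ht0.le, Real.sqrt_sq_eq_abs] at h5
      set T2 : Set (ℝ × ℝ) := {p : ℝ × ℝ | |p.1 * ν 1 + p.2 * ν 0 + d| ≤ w ∧ |p.1| ≤ s}
        with hT2_def
      have hsub : T ⊆ Prod.swap ⁻¹' T2 := by
        rintro p ⟨h1, h2, h3⟩
        refine ⟨?_, ?_⟩
        · simp only [Set.mem_preimage, Prod.fst_swap, Prod.snd_swap]
          rwa [show p.2 * ν 1 + p.1 * ν 0 + d = p.1 * ν 0 + p.2 * ν 1 + d by ring]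
        · simpa using h3
      have hT2m : MeasurableSet T2 := by
        have h1 : Measurable fun p : ℝ × ℝ => |p.1 * ν 1 + p.2 * ν 0 + d| := by fun_prop
        have h2 : Measurable fun p : ℝ × ℝ => |p.1| := by fun_prop
        exact (h1 measurableSet_Iic).inter (h2 measurableSet_Iic)
      have hswap : MeasurePreserving (Prod.swap : ℝ × ℝ → ℝ × ℝ) volume volume := by
        rw [Measure.volume_eq_prod]; exact Measure.measurePreserving_swap
      calc volume T ≤ volume (Prod.swap ⁻¹' T2) := measure_mono hsub
        _ = volume T2 := hswap.measure_preimage hT2m.nullMeasurableSet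
        _ ≤ _ := strip_volume_le (ν 1) (ν 0) d w s t ht0 hc0 hw0
  calc μH[2] ({x : EuclideanSpace ℝ (Fin 3) |
              Metric.infDist x {y : EuclideanSpace ℝ (Fin 3) | ⟪y, ν⟫ = c} < 3*η*ρ}
            ∩ frontier {x : EuclideanSpace ℝ (Fin 3) | ∀ i, |x i| ≤ (1+6*η)*ρ/2}
            ∩ {x : EuclideanSpace ℝ (Fin 3) | x 2 = (1+6*η)*ρ/2})
      ≤ μH[2] (topFaceEmb s '' T) := measure_mono hW
    _ ≤ ((2:ℝ≥0) : ℝ≥0∞)^(2:ℝ) * μH[2] T := hf.hausdorffMeasure_image_le (by norm_num) T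
    _ = 4 * volume T := by
        rw [MeasureTheory.hausdorffMeasure_prod_real]
        congr 1
        rw [show ((2:ℝ)) = ((2:ℕ):ℝ) by norm_num, ENNReal.rpow_natCast]
        norm_num
    _ ≤ 4 * (ENNReal.ofReal (2*s) * ENNReal.ofReal (2*(w/t))) := mul_le_mul_right hvol 4
    _ ≤ ENNReal.ofReal (300*η*ρ^2/θ) := by
        rw [← ENNReal.ofReal_mul (by positivity), ← ENNReal.ofReal_ofNat,
          ← ENNReal.ofReal_mul (by norm_num)]
        apply ENNReal.ofReal_le_ofReal
        have hwt : w / t = w * Real.sqrt 2 / θ := by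
          rw [ht_def]; field_simp
        rw [hwt, hs_def, hw_def]
        have hsq2 : Real.sqrt 2 ≤ 1.5 := by
          nlinarith [Real.sq_sqrt (show (0:ℝ) ≤ 2 by norm_num), Real.sqrt_nonneg 2]
        have hLHS : 4 * (2 * ((1+6*η)*ρ/2) * (2 * (3*η*ρ * Real.sqrt 2 / θ)))
            = (24 * (1+6*η) * η * ρ^2 * Real.sqrt 2) / θ := by
          field_simp; ring
        rw [hLHS, div_le_div_iff₀ hθ0 hθ0]
        have A : 0 ≤ η*ρ^2*θ := by positivity
        have B : 0 ≤ η*η*ρ^2*θ := by positivity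
        nlinarith [mul_nonneg A (sub_nonneg.mpr hsq2), mul_nonneg B (sub_nonneg.mpr hsq2),
          mul_nonneg A (sub_nonneg.mpr hη1), A, B]
end
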